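/- Let β ∈ (0,∞) and 0 ≤ m ≤ M, and let U(1), U(2) be independent Unif([0,1]) random variables. Define r = 𝟙(U(1) ≤ ((1+m)/(1+M))^β), m' = (1+m)U(2)^{1/β}, and M' = r·(1+m)U(2)^{1/β} + (1−r)·(1+M)U(1)^{1/β}. Then E[M' − m'] = (β/(β+1))(M − m). -/

import Mathlib

open MeasureTheory ProbabilityTheory

/-- For `β > 0`, `0 ≤ m ≤ M` and independent `U(1), U(2) ~ Unif([0,1])`, with
`r = 𝟙(U(1) ≤ ((1+m)/(1+M))^β)`, `m' = (1+m)·U(2)^(1/β)` and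
`M' = r·(1+m)·U(2)^(1/β) + (1−r)·(1+M)·U(1)^(1/β)`, one has
`E[M' − m'] = (β/(β+1))·(M − m)`. -/
theorem expected_gap_contraction
    {Ω : Type*} [MeasureSpace Ω] [IsProbabilityMeasure (ℙ : Measure Ω)]
    (β : ℝ) (hβ : 0 < β) (m M : ℝ) (hm : 0 ≤ m) (hmM : m ≤ M)
    (U1 U2 : Ω → ℝ) (hU1 : Measurable U1) (hU2 : Measurable U2)
    (law1 : Measure.map U1 ℙ = volume.restrict (Set.Icc (0:ℝ) 1))
    (law2 : Measure.map U2 ℙ = volume.restrict (Set.Icc (0:ℝ) 1))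
    (hind : IndepFun U1 U2 ℙ) :
    ∫ ω, (((if U1 ω ≤ ((1 + m) / (1 + M)) ^ β then (1:ℝ) else 0)
            * (1 + m) * (U2 ω) ^ (1/β)
          + (1 - if U1 ω ≤ ((1 + m) / (1 + M)) ^ β then (1:ℝ) else 0)
            * (1 + M) * (U1 ω) ^ (1/β))
        - (1 + m) * (U2 ω) ^ (1/β))
      = (β / (β + 1)) * (M - m) := by
  have hA : (0:ℝ) < 1 + m := by linarith
  have hB : (0:ℝ) < 1 + M := by linarith
  have hAB : 0 < (1 + m) / (1 + M) := div_pos hA hB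
  set c : ℝ := ((1 + m) / (1 + M)) ^ β with hc
  have hc0 : 0 < c := Real.rpow_pos_of_pos hAB β
  have hc1 : c ≤ 1 := Real.rpow_le_one hAB.le (by rw [div_le_one hB]; linarith) hβ.le
  have hp0 : (0:ℝ) ≤ 1/β := by positivity
  -- the three building blocks
  set f : ℝ → ℝ := fun x => (1 - if x ≤ c then (1:ℝ) else 0) * (1 + M) * x ^ (1/β) with hf
  set g : ℝ → ℝ := fun x => (1 - if x ≤ c then (1:ℝ) else 0) * (1 + m) with hg
  set h : ℝ → ℝ := fun y => y ^ (1/β) with hh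
  have hmeas_le : MeasurableSet {x : ℝ | x ≤ c} := measurableSet_le measurable_id measurable_const
  have hrpow : Measurable fun x : ℝ => x ^ (1/β) :=
    (Real.continuous_rpow_const hp0).measurable
  have hfmeas : Measurable f := by
    apply Measurable.mul
    · exact (Measurable.sub measurable_const (Measurable.ite hmeas_le measurable_const
        measurable_const)).mul measurable_const
    · exact hrpow
  have hgmeas : Measurable g :=
    (Measurable.sub measurable_const (Measurable.ite hmeas_le measurable_const
      measurable_const)).mul measurable_const
  have hhmeas : Measurable h := hrpow
  -- a.e. range information
  have hU1mem : ∀ᵐ ω ∂(ℙ : Measure Ω), U1 ω ∈ Set.Icc (0:ℝ) 1 := by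
    have h1 : (Measure.map U1 ℙ) (Set.Icc (0:ℝ) 1) = 1 := by
      rw [law1, Measure.restrict_apply measurableSet_Icc, Set.inter_self, Real.volume_Icc]
      norm_num
    rw [Measure.map_apply hU1 measurableSet_Icc] at h1
    exact ae_iff.2 (by
      have : ℙ (U1 ⁻¹' Set.Icc (0:ℝ) 1)ᶜ = 0 := by
        rw [measure_compl (hU1 measurableSet_Icc) (measure_ne_top _ _), h1]
        simp
      simpa [Set.preimage, Set.compl_setOf] using this)
  have hU2mem : ∀ᵐ ω ∂(ℙ : Measure Ω), U2 ω ∈ Set.Icc (0:ℝ) 1 := by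
    have h1 : (Measure.map U2 ℙ) (Set.Icc (0:ℝ) 1) = 1 := by
      rw [law2, Measure.restrict_apply measurableSet_Icc, Set.inter_self, Real.volume_Icc]
      norm_num
    rw [Measure.map_apply hU2 measurableSet_Icc] at h1
    exact ae_iff.2 (by
      have : ℙ (U2 ⁻¹' Set.Icc (0:ℝ) 1)ᶜ = 0 := by
        rw [measure_compl (hU2 measurableSet_Icc) (measure_ne_top _ _), h1]
        simp
      simpa [Set.preimage, Set.compl_setOf] using this)
  -- bounds
  have hind_bd : ∀ x : ℝ, |1 - if x ≤ c then (1:ℝ) else 0| ≤ 1 := by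
    intro x; split <;> norm_num
  have hrpow_bd : ∀ x : ℝ, x ∈ Set.Icc (0:ℝ) 1 → |x ^ (1/β)| ≤ 1 := by
    intro x hx
    rw [abs_of_nonneg (Real.rpow_nonneg hx.1 _)]
    exact Real.rpow_le_one hx.1 hx.2 hp0
  -- integrability
  have hint_f : Integrable (fun ω => f (U1 ω)) ℙ := by
    refine Integrable.mono' (integrable_const (1 + M)) (hfmeas.comp hU1).aestronglyMeasurable ?_
    filter_upwards [hU1mem] with ω hω
    calc ‖f (U1 ω)‖ = |1 - if U1 ω ≤ c then (1:ℝ) else 0| * |1 + M| * |(U1 ω) ^ (1/β)| := by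
          simp [hf, abs_mul]
      _ ≤ 1 * (1 + M) * 1 := by
          apply mul_le_mul (mul_le_mul (hind_bd _) (le_of_eq (abs_of_pos hB)) (abs_nonneg _)
            (by norm_num)) (hrpow_bd _ hω) (abs_nonneg _) (by positivity)
      _ = 1 + M := by ring
  have hint_gh : Integrable (fun ω => g (U1 ω) * h (U2 ω)) ℙ := by
    refine Integrable.mono' (integrable_const (1 + m))
      (((hgmeas.comp hU1).mul (hhmeas.comp hU2)).aestronglyMeasurable) ?_
    filter_upwards [hU2mem] with ω hω
    calc ‖g (U1 ω) * h (U2 ω)‖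
        = |1 - if U1 ω ≤ c then (1:ℝ) else 0| * |1 + m| * |(U2 ω) ^ (1/β)| := by
          simp [hg, hh, abs_mul]
      _ ≤ 1 * (1 + m) * 1 := by
          apply mul_le_mul (mul_le_mul (hind_bd _) (le_of_eq (abs_of_pos hA)) (abs_nonneg _)
            (by norm_num)) (hrpow_bd _ hω) (abs_nonneg _) (by positivity)
      _ = 1 + m := by ring
  -- rewrite the integrand
  have hrw : ∀ ω, (((if U1 ω ≤ c then (1:ℝ) else 0) * (1 + m) * (U2 ω) ^ (1/β)
          + (1 - if U1 ω ≤ c then (1:ℝ) else 0) * (1 + M) * (U1 ω) ^ (1/β))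
        - (1 + m) * (U2 ω) ^ (1/β)) = f (U1 ω) - g (U1 ω) * h (U2 ω) := by
    intro ω
    simp only [hf, hg, hh]
    ring
  rw [show (fun ω => (((if U1 ω ≤ c then (1:ℝ) else 0) * (1 + m) * (U2 ω) ^ (1/β)
          + (1 - if U1 ω ≤ c then (1:ℝ) else 0) * (1 + M) * (U1 ω) ^ (1/β))
        - (1 + m) * (U2 ω) ^ (1/β)))
      = (fun ω => f (U1 ω) - g (U1 ω) * h (U2 ω)) from funext hrw]
  rw [integral_sub hint_f hint_gh]
  -- split the product via independence
  have hprod : ∫ ω, g (U1 ω) * h (U2 ω) ∂ℙ = (∫ ω, g (U1 ω) ∂ℙ) * ∫ ω, h (U2 ω) ∂ℙ := by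
    exact (hind.comp hgmeas hhmeas).integral_fun_mul_eq_mul_integral
      (hgmeas.comp hU1).aestronglyMeasurable (hhmeas.comp hU2).aestronglyMeasurable
  rw [hprod]
  -- transfer to the laws
  have hf1 : ∫ ω, f (U1 ω) ∂ℙ = ∫ x in Set.Icc (0:ℝ) 1, f x := by
    rw [← law1]
    exact (integral_map hU1.aemeasurable (by rw [law1]; exact hfmeas.aestronglyMeasurable)).symm
  have hg1 : ∫ ω, g (U1 ω) ∂ℙ = ∫ x in Set.Icc (0:ℝ) 1, g x := by
    rw [← law1]
    exact (integral_map hU1.aemeasurable (by rw [law1]; exact hgmeas.aestronglyMeasurable)).symm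
  have hh2 : ∫ ω, h (U2 ω) ∂ℙ = ∫ x in Set.Icc (0:ℝ) 1, h x := by
    rw [← law2]
    exact (integral_map hU2.aemeasurable (by rw [law2]; exact hhmeas.aestronglyMeasurable)).symm
  rw [hf1, hg1, hh2]
  -- compute the three one-dimensional integrals
  have hinter : Set.Icc (0:ℝ) 1 ∩ Set.Ioi c = Set.Ioc c 1 := by
    ext x
    simp only [Set.mem_inter_iff, Set.mem_Icc, Set.mem_Ioi, Set.mem_Ioc]
    constructor
    · rintro ⟨⟨_, h1⟩, h2⟩; exact ⟨h2, h1⟩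
    · rintro ⟨h1, h2⟩; exact ⟨⟨le_trans hc0.le h1.le, h2⟩, h1⟩
  have hFval : ∫ x in Set.Icc (0:ℝ) 1, f x
      = (1 + M) * ((1 ^ (1/β + 1) - c ^ (1/β + 1)) / (1/β + 1)) := by
    have heq : ∀ x, f x = Set.indicator (Set.Ioi c) (fun x => (1 + M) * x ^ (1/β)) x := by
      intro x
      by_cases hx : x ≤ c
      · rw [Set.indicator_of_notMem (by simpa using not_lt.2 hx)]
        simp [hf, hx]
      · rw [Set.indicator_of_mem (by simpa using lt_of_not_ge hx)]
        simp only [hf, hx, if_false]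
        ring
    rw [show f = Set.indicator (Set.Ioi c) (fun x => (1 + M) * x ^ (1/β)) from funext heq,
      setIntegral_indicator measurableSet_Ioi, hinter,
      ← intervalIntegral.integral_of_le hc1, intervalIntegral.integral_const_mul,
      integral_rpow (Or.inl (by linarith))]
  have hGval : ∫ x in Set.Icc (0:ℝ) 1, g x = (1 + m) * (1 - c) := by
    have heq : ∀ x, g x = Set.indicator (Set.Ioi c) (fun _ => (1 + m)) x := by
      intro x
      by_cases hx : x ≤ c
      · rw [Set.indicator_of_notMem (by simpa using not_lt.2 hx)]
        simp [hg, hx]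
      · rw [Set.indicator_of_mem (by simpa using lt_of_not_ge hx)]
        simp [hg, hx]
    rw [show g = Set.indicator (Set.Ioi c) (fun _ => (1 + m)) from funext heq,
      setIntegral_indicator measurableSet_Ioi, hinter, setIntegral_const,
      Real.volume_real_Ioc_of_le hc1]
    rw [smul_eq_mul]; ring
  have hHval : ∫ x in Set.Icc (0:ℝ) 1, h x = (1 - 0) / (1/β + 1) := by
    rw [hh, integral_Icc_eq_integral_Ioc, ← intervalIntegral.integral_of_le (by norm_num : (0:ℝ) ≤ 1),
      integral_rpow (Or.inl (by linarith))]
    rw [Real.one_rpow, Real.zero_rpow (by positivity)]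
  rw [hFval, hGval, hHval]
  -- the key algebraic identity about c
  have hckey : c ^ (1/β + 1) = (1 + m) / (1 + M) * c := by
    have h1 : c ^ (1/β) = (1 + m) / (1 + M) := by
      rw [hc, ← Real.rpow_mul hAB.le, mul_one_div_cancel hβ.ne', Real.rpow_one]
    rw [Real.rpow_add hc0, Real.rpow_one, h1]
  rw [hckey, Real.one_rpow]
  have hβ1 : β + 1 ≠ 0 := by positivity
  field_simp
  ring
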